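/- arXiv:1604.08909 — 5 statements merged into one kernel-verified Lean document; each statement's English description precedes it below -/
import Mathlib

section
/- Let A be a po-group with RDP for which there exist non-comparable elements a,b ∈ A⁺\{0} with a+b = b+a such that no d ∈ A with 0 < d ≤ a, d ≤ b satisfies −a+d+a = −b+d+b. Let G be a directed po-group. If the lexicographic product A ×⃗ G satisfies RDP, then G satisfies RDP and, for every equation u₁+u₂ = v₁+v₂ of elements of G, there exist d₁,d₂ ∈ G with d₁ ≤ u₁, d₁ ≤ v₂, d₂ ≤ u₂, d₂ ≤ v₁, d₁+d₂ = d₂+d₁, and −u₁+v₁ = −d₁+d₂ (i.e., G has wRDP). -/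
/-- A po-group satisfies RDP if every equation `a₁ + a₂ = b₁ + b₂` of positive elements
admits a Riesz decomposition by four positive elements. -/
def RDP (G : Type*) [AddGroup G] [PartialOrder G] : Prop :=
  ∀ a₁ a₂ b₁ b₂ : G, 0 ≤ a₁ → 0 ≤ a₂ → 0 ≤ b₁ → 0 ≤ b₂ → a₁ + a₂ = b₁ + b₂ →
    ∃ c₁₁ c₁₂ c₂₁ c₂₂ : G, 0 ≤ c₁₁ ∧ 0 ≤ c₁₂ ∧ 0 ≤ c₂₁ ∧ 0 ≤ c₂₂ ∧
      a₁ = c₁₁ + c₁₂ ∧ a₂ = c₂₁ + c₂₂ ∧ b₁ = c₁₁ + c₂₁ ∧ b₂ = c₁₂ + c₂₂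

/-- A po-group has wRDP if for each equation `u₁ + u₂ = v₁ + v₂` there are `d₁, d₂` with
`d₁ ≤ u₁, v₂`, `d₂ ≤ u₂, v₁`, `d₁ + d₂ = d₂ + d₁` and `-u₁ + v₁ = -d₁ + d₂`. -/
def wRDP (G : Type*) [AddGroup G] [PartialOrder G] : Prop :=
  ∀ u₁ u₂ v₁ v₂ : G, u₁ + u₂ = v₁ + v₂ →
    ∃ d₁ d₂ : G, d₁ ≤ u₁ ∧ d₁ ≤ v₂ ∧ d₂ ≤ u₂ ∧ d₂ ≤ v₁ ∧
      d₁ + d₂ = d₂ + d₁ ∧ -u₁ + v₁ = -d₁ + d₂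

/-- Let `A` be a po-group with RDP having non-comparable commuting
`a, b ∈ A⁺ \ {0}` for which no `d` with `0 < d ≤ a, b` satisfies `-a + d + a = -b + d + b`,
and let `G` be a directed po-group. If `A ×ₗ G` satisfies RDP, then `G` satisfies RDP
and `G` has wRDP. -/
theorem rdp_and_wRDP_of_lex_rdp {A G : Type*}
    [AddGroup A] [PartialOrder A]
    [CovariantClass A A (· + ·) (· ≤ ·)]
    [CovariantClass A A (Function.swap (· + ·)) (· ≤ ·)]
    [AddGroup G] [PartialOrder G]
    [CovariantClass G G (· + ·) (· ≤ ·)]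
    [CovariantClass G G (Function.swap (· + ·)) (· ≤ ·)]
    (hA : RDP A)
    (hab : ∃ a b : A, 0 ≤ a ∧ a ≠ 0 ∧ 0 ≤ b ∧ b ≠ 0 ∧ ¬ a ≤ b ∧ ¬ b ≤ a ∧
      a + b = b + a ∧ ¬ ∃ d : A, 0 < d ∧ d ≤ a ∧ d ≤ b ∧ -a + d + a = -b + d + b)
    (hdir : ∀ x y : G, ∃ z : G, x ≤ z ∧ y ≤ z)
    (hlex : RDP (A ×ₗ G)) :
    RDP G ∧ wRDP G := by
  have le_iff : ∀ x y : A × G, toLex x ≤ toLex y ↔ x.1 < y.1 ∨ x.1 = y.1 ∧ x.2 ≤ y.2 :=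
    fun x y => Prod.Lex.le_iff
  constructor
  · -- RDP G
    intro a₁ a₂ b₁ b₂ ha₁ ha₂ hb₁ hb₂ heq
    have pos : ∀ g : G, 0 ≤ g → (0 : A ×ₗ G) ≤ toLex (0, g) := by
      intro g hg
      exact (le_iff (0,0) (0,g)).2 (Or.inr ⟨rfl, hg⟩)
    obtain ⟨c₁₁, c₁₂, c₂₁, c₂₂, h₁₁, h₁₂, h₂₁, h₂₂, e₁, e₂, e₃, e₄⟩ :=
      hlex (toLex (0, a₁)) (toLex (0, a₂)) (toLex (0, b₁)) (toLex (0, b₂))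
        (pos _ ha₁) (pos _ ha₂) (pos _ hb₁) (pos _ hb₂)
        (by show toLex ((0:A)+0, a₁+a₂) = toLex ((0:A)+0, b₁+b₂); rw [heq])
    -- components
    have comp : ∀ c : A ×ₗ G, (0 : A ×ₗ G) ≤ c → 0 ≤ (ofLex c).1 := by
      intro c hc
      rcases (le_iff (0,0) (ofLex c)).1 hc with h | h
      · exact le_of_lt h
      · exact le_of_eq h.1
    have sum0 : ∀ c d : A ×ₗ G, (0 : A ×ₗ G) ≤ c → (0 : A ×ₗ G) ≤ d →
        (ofLex c).1 + (ofLex d).1 = 0 → (ofLex c).1 = 0 ∧ (ofLex d).1 = 0 := by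
      intro c d hc hd hsum
      have hc' := comp c hc
      have hd' := comp d hd
      have h1 : (ofLex c).1 ≤ 0 := by
        calc (ofLex c).1 = (ofLex c).1 + 0 := (add_zero _).symm
        _ ≤ (ofLex c).1 + (ofLex d).1 := add_le_add le_rfl hd'
        _ = 0 := hsum
      have hc0 : (ofLex c).1 = 0 := le_antisymm h1 hc'
      refine ⟨hc0, ?_⟩
      rw [hc0, zero_add] at hsum
      exact hsum
    have snd_nonneg : ∀ c : A ×ₗ G, (0 : A ×ₗ G) ≤ c → (ofLex c).1 = 0 → 0 ≤ (ofLex c).2 := by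
      intro c hc h0
      rcases (le_iff (0,0) (ofLex c)).1 hc with h | h
      · exact absurd (h0 ▸ h) (lt_irrefl 0)
      · exact h.2
    have p1 : ((0:A), a₁) = (ofLex c₁₁ + ofLex c₁₂) := congrArg ofLex e₁
    have p2 : ((0:A), a₂) = (ofLex c₂₁ + ofLex c₂₂) := congrArg ofLex e₂
    have p3 : ((0:A), b₁) = (ofLex c₁₁ + ofLex c₂₁) := congrArg ofLex e₃
    have p4 : ((0:A), b₂) = (ofLex c₁₂ + ofLex c₂₂) := congrArg ofLex e₄
    have f1 := congrArg Prod.fst p1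
    have f2 := congrArg Prod.fst p2
    obtain ⟨z₁₁, z₁₂⟩ := sum0 c₁₁ c₁₂ h₁₁ h₁₂ f1.symm
    obtain ⟨z₂₁, z₂₂⟩ := sum0 c₂₁ c₂₂ h₂₁ h₂₂ f2.symm
    exact ⟨(ofLex c₁₁).2, (ofLex c₁₂).2, (ofLex c₂₁).2, (ofLex c₂₂).2,
      snd_nonneg _ h₁₁ z₁₁, snd_nonneg _ h₁₂ z₁₂, snd_nonneg _ h₂₁ z₂₁, snd_nonneg _ h₂₂ z₂₂,
      congrArg Prod.snd p1, congrArg Prod.snd p2, congrArg Prod.snd p3, congrArg Prod.snd p4⟩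
  · -- wRDP G
    intro u₁ u₂ v₁ v₂ heq
    obtain ⟨a, b, ha0, hane, hb0, hbne, hnab, hnba, hcomm, hnod⟩ := hab
    have hapos : (0:A) < a := lt_of_le_of_ne ha0 (Ne.symm hane)
    have hbpos : (0:A) < b := lt_of_le_of_ne hb0 (Ne.symm hbne)
    have posa : ∀ g : G, (0 : A ×ₗ G) ≤ toLex (a, g) := fun g =>
      (le_iff (0,0) (a,g)).2 (Or.inl hapos)
    have posb : ∀ g : G, (0 : A ×ₗ G) ≤ toLex (b, g) := fun g =>
      (le_iff (0,0) (b,g)).2 (Or.inl hbpos)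
    obtain ⟨c₁₁, c₁₂, c₂₁, c₂₂, h₁₁, h₁₂, h₂₁, h₂₂, e₁, e₂, e₃, e₄⟩ :=
      hlex (toLex (a, u₁)) (toLex (b, u₂)) (toLex (b, v₁)) (toLex (a, v₂))
        (posa u₁) (posb u₂) (posb v₁) (posa v₂)
        (by show toLex (a+b, u₁+u₂) = toLex (b+a, v₁+v₂); rw [heq, hcomm])
    set x₁₁ := (ofLex c₁₁).1; set x₁₂ := (ofLex c₁₂).1
    set x₂₁ := (ofLex c₂₁).1; set x₂₂ := (ofLex c₂₂).1
    set g₁₁ := (ofLex c₁₁).2; set g₁₂ := (ofLex c₁₂).2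
    set g₂₁ := (ofLex c₂₁).2; set g₂₂ := (ofLex c₂₂).2
    have p1 : (a, u₁) = (ofLex c₁₁ + ofLex c₁₂) := congrArg ofLex e₁
    have p2 : (b, u₂) = (ofLex c₂₁ + ofLex c₂₂) := congrArg ofLex e₂
    have p3 : (b, v₁) = (ofLex c₁₁ + ofLex c₂₁) := congrArg ofLex e₃
    have p4 : (a, v₂) = (ofLex c₁₂ + ofLex c₂₂) := congrArg ofLex e₄
    have fa1 : a = x₁₁ + x₁₂ := congrArg Prod.fst p1
    have fb1 : b = x₂₁ + x₂₂ := congrArg Prod.fst p2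
    have fb2 : b = x₁₁ + x₂₁ := congrArg Prod.fst p3
    have fa2 : a = x₁₂ + x₂₂ := congrArg Prod.fst p4
    have su1 : u₁ = g₁₁ + g₁₂ := congrArg Prod.snd p1
    have su2 : u₂ = g₂₁ + g₂₂ := congrArg Prod.snd p2
    have sv1 : v₁ = g₁₁ + g₂₁ := congrArg Prod.snd p3
    have sv2 : v₂ = g₁₂ + g₂₂ := congrArg Prod.snd p4
    have comp : ∀ c : A ×ₗ G, (0 : A ×ₗ G) ≤ c → 0 ≤ (ofLex c).1 := by
      intro c hc
      rcases (le_iff (0,0) (ofLex c)).1 hc with h | h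
      · exact le_of_lt h
      · exact le_of_eq h.1
    have hx₁₂ : 0 ≤ x₁₂ := comp _ h₁₂
    have hx₂₁ : 0 ≤ x₂₁ := comp _ h₂₁
    -- x₂₂ identities
    have hx22a : x₂₂ = -x₁₂ + x₁₁ + x₁₂ := by
      have : x₁₁ + x₁₂ = x₁₂ + x₂₂ := fa1 ▸ fa2
      have := congrArg (fun t => -x₁₂ + t) this
      simpa [← add_assoc] using this.symm
    have hx22b : x₂₂ = -x₂₁ + x₁₁ + x₂₁ := by
      have : x₂₁ + x₂₂ = x₁₁ + x₂₁ := fb1 ▸ fb2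
      have := congrArg (fun t => -x₂₁ + t) this
      simpa [← add_assoc] using this
    -- x₁₁ = 0
    have hx11 : x₁₁ = 0 := by
      by_contra hne
      rcases (le_iff (0,0) (ofLex c₁₁)).1 h₁₁ with h | h
      · apply hnod
        refine ⟨x₁₁, h, ?_, ?_, ?_⟩
        · rw [fa1]; exact le_add_of_nonneg_right hx₁₂
        · rw [fb2]; exact le_add_of_nonneg_right hx₂₁
        · rw [fa1, fb2]
          have l : -(x₁₁ + x₁₂) + x₁₁ + (x₁₁ + x₁₂) = -x₁₂ + x₁₁ + x₁₂ := by
            simp [neg_add_rev, add_assoc]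
          have r : -(x₁₁ + x₂₁) + x₁₁ + (x₁₁ + x₂₁) = -x₂₁ + x₁₁ + x₂₁ := by
            simp [neg_add_rev, add_assoc]
          rw [l, r, ← hx22a, ← hx22b]
      · exact hne h.1.symm
    have hx22 : x₂₂ = 0 := by rw [hx22a, hx11, add_zero, neg_add_cancel]
    have hg11 : 0 ≤ g₁₁ := by
      rcases (le_iff (0,0) (ofLex c₁₁)).1 h₁₁ with h | h
      · exact absurd (lt_of_lt_of_le h (le_of_eq hx11)) (lt_irrefl (0:A))
      · exact h.2
    have hg22 : 0 ≤ g₂₂ := by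
      rcases (le_iff (0,0) (ofLex c₂₂)).1 h₂₂ with h | h
      · exact absurd (lt_of_lt_of_le h (le_of_eq hx22)) (lt_irrefl (0:A))
      · exact h.2
    refine ⟨g₁₂, g₂₁, ?_, ?_, ?_, ?_, ?_, ?_⟩
    · rw [su1]; exact le_add_of_nonneg_left hg11
    · rw [sv2]; exact le_add_of_nonneg_right hg22
    · rw [su2]; exact le_add_of_nonneg_right hg22
    · rw [sv1]; exact le_add_of_nonneg_left hg11
    · -- commutation from heq
      have : g₁₁ + (g₁₂ + g₂₁) + g₂₂ = g₁₁ + (g₂₁ + g₁₂) + g₂₂ := by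
        have h := heq
        rw [su1, su2, sv1, sv2] at h
        simpa [add_assoc] using h
      have := add_right_cancel this
      exact add_left_cancel this
    · rw [su1, sv1]
      simp [neg_add_rev, add_assoc]
end

section
/- Let G be a po-group with RDP that has wRDP, i.e., for every equation u₁+u₂ = v₁+v₂ of elements of G there exist d₁,d₂ ∈ G with d₁ ≤ u₁, d₁ ≤ v₂, d₂ ≤ u₂, d₂ ≤ v₁, d₁+d₂ = d₂+d₁, and −u₁+v₁ = −d₁+d₂. Then G is directed, and for every po-group A with RDP the lexicographic product A ×⃗ G satisfies RDP. -/
section Aux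

variable {G : Type*} [AddGroup G] [PartialOrder G]
  [CovariantClass G G (· + ·) (· ≤ ·)]
  [CovariantClass G G (Function.swap (· + ·)) (· ≤ ·)]

/-- Master lemma for the `G`-components: solve the system
`g₁ = k₁₁ + k₁₂`, `g₂ = k₂₁ + k₂₂`, `h₁ = k₁₁ + k₂₁`, `h₂ = k₁₂ + k₂₂`
with positivity demands `n_{ij}` at arbitrary positions, assuming the
row/column sums are positive whenever the whole row/column is demanded. -/
lemma gdecomp_aux (hG : RDP G) (hw : wRDP G)
    (hdir : ∀ x y : G, ∃ z : G, x ≤ z ∧ y ≤ z)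
    (g₁ g₂ h₁ h₂ : G) (hs : g₁ + g₂ = h₁ + h₂)
    (n11 n12 n21 n22 : Prop)
    (hyg₁ : n11 → n12 → 0 ≤ g₁) (hyg₂ : n21 → n22 → 0 ≤ g₂)
    (hyh₁ : n11 → n21 → 0 ≤ h₁) (hyh₂ : n12 → n22 → 0 ≤ h₂) :
    ∃ k₁₁ k₁₂ k₂₁ k₂₂ : G,
      (n11 → 0 ≤ k₁₁) ∧ (n12 → 0 ≤ k₁₂) ∧ (n21 → 0 ≤ k₂₁) ∧ (n22 → 0 ≤ k₂₂) ∧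
      g₁ = k₁₁ + k₁₂ ∧ g₂ = k₂₁ + k₂₂ ∧ h₁ = k₁₁ + k₂₁ ∧ h₂ = k₁₂ + k₂₂ := by
  by_cases h12 : n12
  · by_cases h21 : n21
    · by_cases h11 : n11
      · by_cases h22 : n22
        · -- all demands: RDP of G directly
          obtain ⟨k₁₁,k₁₂,k₂₁,k₂₂,p1,p2,p3,p4,e1,e2,e3,e4⟩ :=
            hG g₁ g₂ h₁ h₂ (hyg₁ h11 h12) (hyg₂ h21 h22) (hyh₁ h11 h21) (hyh₂ h12 h22) hs
          exact ⟨k₁₁,k₁₂,k₂₁,k₂₂, fun _ => p1, fun _ => p2, fun _ => p3, fun _ => p4, e1,e2,e3,e4⟩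
        · -- dump at position 22
          obtain ⟨w, hw1, hw2⟩ := hdir (-g₂) (-h₂)
          have p2 : 0 ≤ g₂ + w := by simpa using add_le_add_right hw1 g₂
          have p4 : 0 ≤ h₂ + w := by simpa using add_le_add_right hw2 h₂
          obtain ⟨e₁₁,e₁₂,e₂₁,e₂₂,q1,q2,q3,q4,E1,E2,E3,E4⟩ :=
            hG g₁ (g₂ + w) h₁ (h₂ + w) (hyg₁ h11 h12) p2 (hyh₁ h11 h21) p4
              (by rw [← add_assoc, hs, add_assoc])
          refine ⟨e₁₁, e₁₂, e₂₁, e₂₂ + -w, fun _ => q1, fun _ => q2, fun _ => q3,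
            fun h => absurd h h22, E1, ?_, E3, ?_⟩
          · rw [← add_assoc, ← E2, add_assoc, add_neg_cancel, add_zero]
          · rw [← add_assoc, ← E4, add_assoc, add_neg_cancel, add_zero]
      · by_cases h22 : n22
        · -- dump at position 11
          obtain ⟨w, hw1, hw2⟩ := hdir (-g₁) (-h₁)
          have p1 : 0 ≤ w + g₁ := by simpa using add_le_add_left hw1 g₁
          have p3 : 0 ≤ w + h₁ := by simpa using add_le_add_left hw2 h₁
          obtain ⟨e₁₁,e₁₂,e₂₁,e₂₂,q1,q2,q3,q4,E1,E2,E3,E4⟩ :=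
            hG (w + g₁) g₂ (w + h₁) h₂ p1 (hyg₂ h21 h22) p3 (hyh₂ h12 h22)
              (by rw [add_assoc, hs, add_assoc])
          refine ⟨-w + e₁₁, e₁₂, e₂₁, e₂₂, fun h => absurd h h11, fun _ => q2, fun _ => q3,
            fun _ => q4, ?_, E2, ?_, E4⟩
          · rw [add_assoc, ← E1, ← add_assoc, neg_add_cancel, zero_add]
          · rw [add_assoc, ← E3, ← add_assoc, neg_add_cancel, zero_add]
        · -- the δ-trick: find s ≤ 0, s ≤ -δ commuting with δ
          set δ := -h₁ + g₁ with hδ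
          obtain ⟨d₁, d₂, t1, t2, -, -, hco, hrel⟩ :=
            hw 0 (-δ + -δ) (-δ) (-δ) (by rw [zero_add])
          rw [neg_zero, zero_add] at hrel
          -- hrel : -δ = -d₁ + d₂
          have hd2 : d₂ = d₁ + -δ := by rw [hrel, ← add_assoc, add_neg_cancel, zero_add]
          have hcm : d₁ + -δ = -δ + d₁ := by
            rw [hd2] at hco
            have h' : d₁ + (d₁ + -δ) = d₁ + (-δ + d₁) := by
              rw [hco, add_assoc]
            exact add_left_cancel h'
          have gδ : g₁ + -δ = h₁ := by
            rw [hδ, neg_add_rev, neg_neg, ← add_assoc, add_neg_cancel, zero_add]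
          have δg : δ + g₂ = h₂ := by
            rw [hδ, add_assoc, hs, ← add_assoc, neg_add_cancel, zero_add]
          refine ⟨g₁ + d₁, -d₁, -δ + -d₁, d₁ + (δ + g₂),
            fun h => absurd h h11,
            fun _ => by simpa using add_le_add_right t1 (-d₁),
            fun _ => by simpa using add_le_add_left t2 (-d₁),
            fun h => absurd h h22, ?_, ?_, ?_, ?_⟩
          · rw [add_assoc, add_neg_cancel, add_zero]
          · rw [add_assoc (-δ), ← add_assoc (-d₁) d₁, neg_add_cancel, zero_add, ← add_assoc,
              neg_add_cancel, zero_add]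
          · rw [add_assoc g₁, ← add_assoc d₁ (-δ), hcm, add_assoc (-δ), add_neg_cancel,
              add_zero, gδ]
          · rw [← add_assoc, neg_add_cancel, zero_add, δg]
    · -- n12, ¬n21 : K = (g₁, 0, -g₁ + h₁, h₂)
      refine ⟨g₁, 0, -g₁ + h₁, h₂,
        fun h => hyg₁ h h12, fun _ => le_refl 0, fun h => absurd h h21,
        fun h => hyh₂ h12 h, by rw [add_zero], ?_, ?_, by rw [zero_add]⟩
      · rw [add_assoc, ← hs, ← add_assoc, neg_add_cancel, zero_add]
      · rw [← add_assoc, add_neg_cancel, zero_add]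
  · by_cases h21 : n21
    · -- ¬n12, n21 : K = (h₁, -h₁ + g₁, 0, g₂)
      refine ⟨h₁, -h₁ + g₁, 0, g₂,
        fun h => hyh₁ h h21, fun h => absurd h h12, fun _ => le_refl 0,
        fun h => hyg₂ h21 h, ?_, by rw [zero_add], by rw [add_zero], ?_⟩
      · rw [← add_assoc, add_neg_cancel, zero_add]
      · rw [add_assoc, hs, ← add_assoc, neg_add_cancel, zero_add]
    · -- ¬n12, ¬n21 : main wRDP solution
      obtain ⟨d₁, d₂, t1, t2, t3, t4, hco, hrel⟩ := hw g₁ g₂ h₁ h₂ hs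
      have hcm : d₁ + -d₂ = -d₂ + d₁ := (AddCommute.neg_right hco).eq
      have t5 : -h₁ + g₁ = -d₂ + d₁ := by
        have := congrArg Neg.neg hrel
        rwa [neg_add_rev, neg_neg, neg_add_rev, neg_neg] at this
      refine ⟨g₁ + -d₁, d₁, d₂, -d₂ + g₂,
        fun _ => by simpa using add_le_add_right t1 (-d₁),
        fun h => absurd h h12, fun h => absurd h h21,
        fun _ => by simpa using add_le_add_left t3 (-d₂), ?_, ?_, ?_, ?_⟩
      · rw [add_assoc, neg_add_cancel, add_zero]
      · rw [← add_assoc, add_neg_cancel, zero_add]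
      · rw [add_assoc, ← hrel, ← add_assoc, add_neg_cancel, zero_add]
      · rw [← add_assoc, hcm, ← t5, add_assoc, hs, ← add_assoc, neg_add_cancel, zero_add]

end Aux

/-- If `G` is a po-group with RDP having wRDP, then `G` is directed and,
for every po-group `A` with RDP, the lexicographic product `A ×ₗ G` satisfies RDP. -/
theorem directed_and_rdp_lex_of_wRDP {G : Type*}
    [AddGroup G] [PartialOrder G]
    [CovariantClass G G (· + ·) (· ≤ ·)]
    [CovariantClass G G (Function.swap (· + ·)) (· ≤ ·)]
    (hG : RDP G) (hw : wRDP G) :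
    (∀ x y : G, ∃ z : G, x ≤ z ∧ y ≤ z) ∧
    (∀ (A : Type u) [AddGroup A] [PartialOrder A]
      [CovariantClass A A (· + ·) (· ≤ ·)]
      [CovariantClass A A (Function.swap (· + ·)) (· ≤ ·)],
      RDP A → RDP (A ×ₗ G)) := by
  have hlow : ∀ x y : G, ∃ d : G, d ≤ x ∧ d ≤ y := by
    intro x y
    obtain ⟨d₁, d₂, h1, h2, -, -, -, -⟩ :=
      hw x (-x + y) 0 y (by rw [← add_assoc, add_neg_cancel, zero_add])
    exact ⟨d₁, h1, h2⟩
  have hdir : ∀ x y : G, ∃ z : G, x ≤ z ∧ y ≤ z := by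
    intro x y
    obtain ⟨d, h1, h2⟩ := hlow (-x) (-y)
    refine ⟨-d, ?_, ?_⟩
    · have := add_le_add_right (add_le_add_left h1 x) (-d)
      simpa using this
    · have := add_le_add_right (add_le_add_left h2 y) (-d)
      simpa using this
  refine ⟨hdir, ?_⟩
  intro A _ _ _ _ hA
  intro x₁ x₂ y₁ y₂ hx₁ hx₂ hy₁ hy₂ hsum
  -- characterizations of positivity in the lex product
  have hx₁' := Prod.Lex.le_iff.mp hx₁
  have hx₂' := Prod.Lex.le_iff.mp hx₂
  have hy₁' := Prod.Lex.le_iff.mp hy₁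
  have hy₂' := Prod.Lex.le_iff.mp hy₂
  have ha₁ : (0 : A) ≤ (ofLex x₁).1 := by rcases hx₁' with h | ⟨h, -⟩; exacts [h.le, h.le]
  have ha₂ : (0 : A) ≤ (ofLex x₂).1 := by rcases hx₂' with h | ⟨h, -⟩; exacts [h.le, h.le]
  have hb₁ : (0 : A) ≤ (ofLex y₁).1 := by rcases hy₁' with h | ⟨h, -⟩; exacts [h.le, h.le]
  have hb₂ : (0 : A) ≤ (ofLex y₂).1 := by rcases hy₂' with h | ⟨h, -⟩; exacts [h.le, h.le]
  have hsumA : (ofLex x₁).1 + (ofLex x₂).1 = (ofLex y₁).1 + (ofLex y₂).1 :=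
    congrArg (fun z : A ×ₗ G => (ofLex z).1) hsum
  have hsumG : (ofLex x₁).2 + (ofLex x₂).2 = (ofLex y₁).2 + (ofLex y₂).2 :=
    congrArg (fun z : A ×ₗ G => (ofLex z).2) hsum
  obtain ⟨c₁₁, c₁₂, c₂₁, c₂₂, pc11, pc12, pc21, pc22, eA1, eA2, eA3, eA4⟩ :=
    hA _ _ _ _ ha₁ ha₂ hb₁ hb₂ hsumA
  -- positivity knowledge on the G-components coming from vanishing A-components
  have hyg₁ : c₁₁ = 0 → c₁₂ = 0 → 0 ≤ (ofLex x₁).2 := by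
    intro h h'
    have h0 : (ofLex x₁).1 = 0 := by rw [eA1, h, h', add_zero]
    rcases hx₁' with hlt | ⟨-, hg⟩
    · rw [h0] at hlt; exact absurd hlt (lt_irrefl 0)
    · exact hg
  have hyg₂ : c₂₁ = 0 → c₂₂ = 0 → 0 ≤ (ofLex x₂).2 := by
    intro h h'
    have h0 : (ofLex x₂).1 = 0 := by rw [eA2, h, h', add_zero]
    rcases hx₂' with hlt | ⟨-, hg⟩
    · rw [h0] at hlt; exact absurd hlt (lt_irrefl 0)
    · exact hg
  have hyh₁ : c₁₁ = 0 → c₂₁ = 0 → 0 ≤ (ofLex y₁).2 := by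
    intro h h'
    have h0 : (ofLex y₁).1 = 0 := by rw [eA3, h, h', add_zero]
    rcases hy₁' with hlt | ⟨-, hg⟩
    · rw [h0] at hlt; exact absurd hlt (lt_irrefl 0)
    · exact hg
  have hyh₂ : c₁₂ = 0 → c₂₂ = 0 → 0 ≤ (ofLex y₂).2 := by
    intro h h'
    have h0 : (ofLex y₂).1 = 0 := by rw [eA4, h, h', add_zero]
    rcases hy₂' with hlt | ⟨-, hg⟩
    · rw [h0] at hlt; exact absurd hlt (lt_irrefl 0)
    · exact hg
  obtain ⟨k₁₁, k₁₂, k₂₁, k₂₂, pk11, pk12, pk21, pk22, eG1, eG2, eG3, eG4⟩ :=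
    gdecomp_aux hG hw hdir _ _ _ _ hsumG (c₁₁ = 0) (c₁₂ = 0) (c₂₁ = 0) (c₂₂ = 0)
      hyg₁ hyg₂ hyh₁ hyh₂
  have pos : ∀ (c : A) (k : G), 0 ≤ c → (c = 0 → 0 ≤ k) → (0 : A ×ₗ G) ≤ toLex (c, k) := by
    intro c k hc hk
    refine Prod.Lex.le_iff.mpr ?_
    by_cases h : c = 0
    · exact Or.inr ⟨h.symm, hk h⟩
    · exact Or.inl (lt_of_le_of_ne hc (Ne.symm h))
  refine ⟨toLex (c₁₁, k₁₁), toLex (c₁₂, k₁₂), toLex (c₂₁, k₂₁), toLex (c₂₂, k₂₂),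
    pos _ _ pc11 pk11, pos _ _ pc12 pk12, pos _ _ pc21 pk21, pos _ _ pc22 pk22,
    ?_, ?_, ?_, ?_⟩
  · exact congrArg toLex (Prod.ext eA1 eG1)
  · exact congrArg toLex (Prod.ext eA2 eG2)
  · exact congrArg toLex (Prod.ext eA3 eG3)
  · exact congrArg toLex (Prod.ext eA4 eG4)
end

section
/- Let H be a directed po-group with RDP, and consider the lexicographic product H ×⃗ ℝ (ℝ with its usual order). Then H ×⃗ ℝ satisfies RDP, and for any two strictly positive elements x,y of H ×⃗ ℝ with x+y = y+x there exists d ∈ H ×⃗ ℝ with 0 < d ≤ x, d ≤ y and −x+d+x = −y+d+y. -/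
/-- If `H` is a directed po-group with RDP, then the lexicographic product
`H ×ₗ ℝ` satisfies RDP and, for any two strictly positive `x, y ∈ H ×ₗ ℝ` with
`x + y = y + x`, there is `d` with `0 < d ≤ x`, `d ≤ y` and `-x + d + x = -y + d + y`. -/
theorem lex_real_rdp_and_conjugate_lower_bounds {H : Type*}
    [AddGroup H] [PartialOrder H]
    [CovariantClass H H (· + ·) (· ≤ ·)]
    [CovariantClass H H (Function.swap (· + ·)) (· ≤ ·)]
    (hdir : ∀ x y : H, ∃ z : H, x ≤ z ∧ y ≤ z)
    (hH : RDP H) :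
    RDP (H ×ₗ ℝ) ∧
    ∀ x y : H ×ₗ ℝ, 0 < x → 0 < y → x + y = y + x →
      ∃ d : H ×ₗ ℝ, 0 < d ∧ d ≤ x ∧ d ≤ y ∧ -x + d + x = -y + d + y := by
  classical
  constructor
  · -- RDP part
    rintro a₁ a₂ b₁ b₂ h1 h2 h3 h4 heq
    obtain ⟨a, s, rfl⟩ : ∃ a s, a₁ = toLex (a, s) := ⟨(ofLex a₁).1, (ofLex a₁).2, rfl⟩
    obtain ⟨b, t, rfl⟩ : ∃ b t, a₂ = toLex (b, t) := ⟨(ofLex a₂).1, (ofLex a₂).2, rfl⟩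
    obtain ⟨c, u, rfl⟩ : ∃ c u, b₁ = toLex (c, u) := ⟨(ofLex b₁).1, (ofLex b₁).2, rfl⟩
    obtain ⟨d, v, rfl⟩ : ∃ d v, b₂ = toLex (d, v) := ⟨(ofLex b₂).1, (ofLex b₂).2, rfl⟩
    replace h1 : 0 < a ∨ 0 = a ∧ (0:ℝ) ≤ s := Prod.Lex.le_iff (x := toLex (0,(0:ℝ))) (y := toLex (a,s)) |>.1 h1
    replace h2 : 0 < b ∨ 0 = b ∧ (0:ℝ) ≤ t := Prod.Lex.le_iff (x := toLex (0,(0:ℝ))) (y := toLex (b,t)) |>.1 h2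
    replace h3 : 0 < c ∨ 0 = c ∧ (0:ℝ) ≤ u := Prod.Lex.le_iff (x := toLex (0,(0:ℝ))) (y := toLex (c,u)) |>.1 h3
    replace h4 : 0 < d ∨ 0 = d ∧ (0:ℝ) ≤ v := Prod.Lex.le_iff (x := toLex (0,(0:ℝ))) (y := toLex (d,v)) |>.1 h4
    have hfst : a + b = c + d := congrArg (fun z => (ofLex z).1) heq
    have hsnd : s + t = u + v := congrArg (fun z => (ofLex z).2) heq
    have ha : (0:H) ≤ a := h1.elim le_of_lt (fun h => le_of_eq h.1)
    have hb : (0:H) ≤ b := h2.elim le_of_lt (fun h => le_of_eq h.1)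
    have hc : (0:H) ≤ c := h3.elim le_of_lt (fun h => le_of_eq h.1)
    have hd : (0:H) ≤ d := h4.elim le_of_lt (fun h => le_of_eq h.1)
    obtain ⟨c₁₁, c₁₂, c₂₁, c₂₂, p11, p12, p21, p22, e1, e2, e3, e4⟩ :=
      hH a b c d ha hb hc hd hfst
    have F1 : c₁₁ = 0 → c₁₂ = 0 → (0:ℝ) ≤ s := by
      intro z1 z2
      have hz : a = 0 := by rw [e1, z1, z2, add_zero]
      rcases h1 with h | h
      · exact absurd hz (ne_of_gt h)
      · exact h.2
    have F2 : c₁₁ = 0 → c₂₁ = 0 → (0:ℝ) ≤ u := by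
      intro z1 z2
      have hz : c = 0 := by rw [e3, z1, z2, add_zero]
      rcases h3 with h | h
      · exact absurd hz (ne_of_gt h)
      · exact h.2
    have F3 : c₁₂ = 0 → c₂₂ = 0 → u - t ≤ s := by
      intro z1 z2
      have hz : d = 0 := by rw [e4, z1, z2, add_zero]
      have hv : (0:ℝ) ≤ v := by
        rcases h4 with h | h
        · exact absurd hz (ne_of_gt h)
        · exact h.2
      linarith
    have F4 : c₂₁ = 0 → c₂₂ = 0 → u - t ≤ u := by
      intro z1 z2
      have hz : b = 0 := by rw [e2, z1, z2, add_zero]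
      have ht : (0:ℝ) ≤ t := by
        rcases h2 with h | h
        · exact absurd hz (ne_of_gt h)
        · exact h.2
      linarith
    set lam : ℝ := if c₁₁ = 0 then (if c₂₂ = 0 then max 0 (u - t) else 0)
      else (if c₂₂ = 0 then u - t else min (min s u) 0) with hlam
    have h11 : c₁₁ = 0 → 0 ≤ lam := by
      intro z; rw [hlam, if_pos z]
      by_cases z2 : c₂₂ = 0
      · rw [if_pos z2]; exact le_max_left _ _
      · rw [if_neg z2]
    have h22 : c₂₂ = 0 → u - t ≤ lam := by
      intro z; rw [hlam]
      by_cases z1 : c₁₁ = 0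
      · rw [if_pos z1, if_pos z]; exact le_max_right _ _
      · rw [if_neg z1, if_pos z]
    have h12 : c₁₂ = 0 → lam ≤ s := by
      intro z; rw [hlam]
      by_cases z1 : c₁₁ = 0 <;> by_cases z2 : c₂₂ = 0
      · rw [if_pos z1, if_pos z2]; exact max_le (F1 z1 z) (F3 z z2)
      · rw [if_pos z1, if_neg z2]; exact F1 z1 z
      · rw [if_neg z1, if_pos z2]; exact F3 z z2
      · rw [if_neg z1, if_neg z2]; exact le_trans (min_le_left _ _) (min_le_left _ _)
    have h21 : c₂₁ = 0 → lam ≤ u := by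
      intro z; rw [hlam]
      by_cases z1 : c₁₁ = 0 <;> by_cases z2 : c₂₂ = 0
      · rw [if_pos z1, if_pos z2]; exact max_le (F2 z1 z) (F4 z z2)
      · rw [if_pos z1, if_neg z2]; exact F2 z1 z
      · rw [if_neg z1, if_pos z2]; exact F4 z z2
      · rw [if_neg z1, if_neg z2]; exact le_trans (min_le_left _ _) (min_le_right _ _)
    have pos : ∀ (w : H) (r : ℝ), 0 ≤ w → (w = 0 → 0 ≤ r) → (0:H ×ₗ ℝ) ≤ toLex (w, r) := by
      intro w r hw hr
      rcases hw.lt_or_eq with h | h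
      · exact (Prod.Lex.le_iff (x := toLex (0,(0:ℝ))) (y := toLex (w,r))).2 (Or.inl h)
      · exact (Prod.Lex.le_iff (x := toLex (0,(0:ℝ))) (y := toLex (w,r))).2 (Or.inr ⟨h, hr h.symm⟩)
    refine ⟨toLex (c₁₁, lam), toLex (c₁₂, s - lam), toLex (c₂₁, u - lam),
      toLex (c₂₂, t - u + lam), pos _ _ p11 h11, pos _ _ p12 (fun z => by linarith [h12 z]),
      pos _ _ p21 (fun z => by linarith [h21 z]), pos _ _ p22 (fun z => by linarith [h22 z]),
      ?_, ?_, ?_, ?_⟩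
    · show toLex (a, s) = toLex (c₁₁ + c₁₂, lam + (s - lam))
      rw [← e1]; exact congrArg toLex (Prod.ext rfl (by ring))
    · show toLex (b, t) = toLex (c₂₁ + c₂₂, (u - lam) + (t - u + lam))
      rw [← e2]; exact congrArg toLex (Prod.ext rfl (by ring))
    · show toLex (c, u) = toLex (c₁₁ + c₂₁, lam + (u - lam))
      rw [← e3]; exact congrArg toLex (Prod.ext rfl (by ring))
    · show toLex (d, v) = toLex (c₁₂ + c₂₂, (s - lam) + (t - u + lam))
      rw [← e4]; exact congrArg toLex (Prod.ext rfl (show v = s - lam + (t - u + lam) by linarith))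
  · -- second part
    rintro x y hx hy -
    obtain ⟨a, s, rfl⟩ : ∃ a s, x = toLex (a, s) := ⟨(ofLex x).1, (ofLex x).2, rfl⟩
    obtain ⟨b, r, rfl⟩ : ∃ b r, y = toLex (b, r) := ⟨(ofLex y).1, (ofLex y).2, rfl⟩
    replace hx : 0 < a ∨ 0 = a ∧ (0:ℝ) < s := Prod.Lex.lt_iff (x := toLex (0,(0:ℝ))) (y := toLex (a,s)) |>.1 hx
    replace hy : 0 < b ∨ 0 = b ∧ (0:ℝ) < r := Prod.Lex.lt_iff (x := toLex (0,(0:ℝ))) (y := toLex (b,r)) |>.1 hy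
    set t : ℝ := min (if a = 0 then s else 1) (if b = 0 then r else 1) with ht
    have ht1 : 0 < (if a = 0 then s else 1) := by
      by_cases z : a = 0
      · rw [if_pos z]
        rcases hx with h | h
        · exact absurd z.symm (ne_of_lt h)
        · exact h.2
      · rw [if_neg z]; norm_num
    have ht2 : 0 < (if b = 0 then r else 1) := by
      by_cases z : b = 0
      · rw [if_pos z]
        rcases hy with h | h
        · exact absurd z.symm (ne_of_lt h)
        · exact h.2
      · rw [if_neg z]; norm_num
    have htpos : 0 < t := lt_min ht1 ht2
    refine ⟨toLex (0, t), ?_, ?_, ?_, ?_⟩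
    · exact (Prod.Lex.lt_iff (x := toLex (0,(0:ℝ))) (y := toLex (0,t))).2 (Or.inr ⟨rfl, htpos⟩)
    · refine (Prod.Lex.le_iff (x := toLex ((0:H),t)) (y := toLex (a,s))).2 ?_
      rcases hx with h | ⟨h, hs⟩
      · exact Or.inl h
      · have hs' : (if a = 0 then s else 1) = s := if_pos h.symm
        exact Or.inr ⟨h, (min_le_left _ _).trans hs'.le⟩
    · refine (Prod.Lex.le_iff (x := toLex ((0:H),t)) (y := toLex (b,r))).2 ?_
      rcases hy with h | ⟨h, hr⟩
      · exact Or.inl h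
      · have hr' : (if b = 0 then r else 1) = r := if_pos h.symm
        exact Or.inr ⟨h, (min_le_right _ _).trans hr'.le⟩
    · show toLex (-a + 0 + a, -s + t + s) = toLex (-b + 0 + b, -r + t + r)
      congr 1
      refine Prod.ext ?_ ?_
      · simp
      · show -s + t + s = -r + t + r
        ring
end

section
/- Let G be a po-group with RDP such that for every equation u₁+u₂ = v₁+v₂ of elements of G there exists k ∈ G⁺ with v₂ ≤ u₁+k and (u₂−k)+(v₂−k) = (v₂−k)+(u₂−k). Then for every equation u₁+u₂ = v₁+v₂ of (arbitrary) elements of G there exist c₁₁,c₁₂,c₂₁,c₂₂ ∈ G with u₁ = c₁₁+c₁₂, u₂ = c₂₁+c₂₂, v₁ = c₁₁+c₂₁, v₂ = c₁₂+c₂₂, and c₁₁ ∈ G⁺ and c₂₂ ∈ G⁺. -/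
/-- Let `G` be a po-group with RDP such that for every equation
`u₁ + u₂ = v₁ + v₂` there is `k ∈ G⁺` with `v₂ ≤ u₁ + k` and
`(u₂ - k) + (v₂ - k) = (v₂ - k) + (u₂ - k)`. Then every equation `u₁ + u₂ = v₁ + v₂` of
arbitrary elements of `G` admits a decomposition `c₁₁, c₁₂, c₂₁, c₂₂` with
`u₁ = c₁₁ + c₁₂`, `u₂ = c₂₁ + c₂₂`, `v₁ = c₁₁ + c₂₁`, `v₂ = c₁₂ + c₂₂` and
`c₁₁ ≥ 0`, `c₂₂ ≥ 0`. -/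
theorem decomposition_with_positive_corners {G : Type*} [AddGroup G] [PartialOrder G]
    [CovariantClass G G (· + ·) (· ≤ ·)]
    [CovariantClass G G (Function.swap (· + ·)) (· ≤ ·)]
    (hG : RDP G)
    (hP : ∀ u₁ u₂ v₁ v₂ : G, u₁ + u₂ = v₁ + v₂ →
      ∃ k : G, 0 ≤ k ∧ v₂ ≤ u₁ + k ∧
        (u₂ - k) + (v₂ - k) = (v₂ - k) + (u₂ - k)) :
    ∀ u₁ u₂ v₁ v₂ : G, u₁ + u₂ = v₁ + v₂ →
      ∃ c₁₁ c₁₂ c₂₁ c₂₂ : G, u₁ = c₁₁ + c₁₂ ∧ u₂ = c₂₁ + c₂₂ ∧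
        v₁ = c₁₁ + c₂₁ ∧ v₂ = c₁₂ + c₂₂ ∧ 0 ≤ c₁₁ ∧ 0 ≤ c₂₂ := by
  intro u₁ u₂ v₁ v₂ h
  obtain ⟨k, hk0, hkle, hcomm⟩ := hP u₁ u₂ v₁ v₂ h
  refine ⟨u₁ + k - v₂, v₂ - k, u₂ - k, k,
    by simp [sub_eq_add_neg, add_assoc], by simp, ?_, by simp,
    sub_nonneg.mpr hkle, hk0⟩
  have hc : AddCommute (u₂ - k) (v₂ - k) := hcomm
  have key := (hc.neg_right).eq
  have key' : u₂ + -v₂ = k + -v₂ + (u₂ + -k) := by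
    simp only [sub_eq_add_neg, neg_add_rev, neg_neg, add_assoc] at key ⊢
    simpa [add_assoc] using key
  have hv₁ : v₁ = u₁ + (u₂ + -v₂) := by
    have : v₁ + v₂ + -v₂ = u₁ + u₂ + -v₂ := by rw [← h]
    simpa [add_assoc] using this
  rw [hv₁, key']
  simp [sub_eq_add_neg, add_assoc]
end

section
/- Every directed Abelian po-group G has wRDP; that is, for all u₁,u₂,v₁,v₂ ∈ G with u₁+u₂ = v₁+v₂ there exist d₁,d₂ ∈ G with d₁ ≤ u₁, d₁ ≤ v₂, d₂ ≤ u₂, d₂ ≤ v₁, d₁+d₂ = d₂+d₁, and −u₁+v₁ = −d₁+d₂. -/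
lemma myneg {G : Type*} [AddCommGroup G] [PartialOrder G]
    [CovariantClass G G (· + ·) (· ≤ ·)] {a b : G} (h : -a ≤ b) : -b ≤ a := by
  have h1 : a + -a ≤ a + b := add_le_add_right h a
  have h2 : -b + (a + -a) ≤ -b + (a + b) := add_le_add_right h1 _
  calc -b = -b + (a + -a) := by abel
    _ ≤ -b + (a + b) := h2
    _ = a := by abel

/-- Every directed Abelian po-group has wRDP. -/
theorem wRDP_of_directed_abelian {G : Type*} [AddCommGroup G] [PartialOrder G]
    [CovariantClass G G (· + ·) (· ≤ ·)]
    (hdir : ∀ x y : G, ∃ z : G, x ≤ z ∧ y ≤ z) :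
    wRDP G := by
  intro u₁ u₂ v₁ v₂ h
  obtain ⟨z, hz1, hz2⟩ := hdir (-u₁) (-v₂)
  have h1 : -z ≤ u₁ := myneg hz1
  have h2 : -z ≤ v₂ := myneg hz2
  refine ⟨-z, -z - u₁ + v₁, h1, h2, ?_, ?_, ?_, ?_⟩
  · have hu₂ : u₂ = -u₁ + v₁ + v₂ := by
      rw [show u₂ = -u₁ + (u₁ + u₂) by abel, h]; abel
    rw [hu₂]
    calc -z - u₁ + v₁ = -u₁ + v₁ + -z := by abel
      _ ≤ -u₁ + v₁ + v₂ := add_le_add_right h2 _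
  · calc -z - u₁ + v₁ = v₁ + (-z - u₁) := by abel
      _ ≤ v₁ + 0 := add_le_add_right (by simpa [sub_nonpos] using h1) _
      _ = v₁ := by simp
  · abel
  · abel
end
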